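/- Let π be a compactly supported probability measure on ℝ with support contained in [l,1] for some 0 < l < 1, and let r > 0. For each z in the upper half plane ℂ₊ there is at most one m ∈ ℂ₊ satisfying 1/m = −z + r ∫ t/(1 + m t) dπ(t). -/

import Mathlib

open MeasureTheory Complex

-- nonvanishing of the denominator
lemma aux_ne (m : ℂ) (hm : 0 < m.im) (t : ℝ) : 1 + m * (t : ℂ) ≠ 0 := by
  intro h
  rcases eq_or_ne t 0 with ht | ht
  · simp [ht] at h
  · have him : (1 + m * (t : ℂ)).im = m.im * t := by simp
    rw [h] at him
    simp at him
    rcases him with h1 | h1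
    · exact hm.ne' h1
    · exact ht h1

lemma aux_lb (m : ℂ) (hm : 0 < m.im) {l t : ℝ} (hlt : l ≤ t) (hl : 0 < l) :
    l * m.im ≤ ‖1 + m * (t : ℂ)‖ := by
  have h1 : (1 + m * (t : ℂ)).im = m.im * t := by simp
  have h2 : |(1 + m * (t : ℂ)).im| ≤ ‖1 + m * (t : ℂ)‖ :=
    Complex.abs_im_le_norm _
  rw [h1] at h2
  have : l * m.im ≤ m.im * t := by nlinarith
  calc l * m.im ≤ m.im * t := this
    _ ≤ |m.im * t| := le_abs_self _
    _ ≤ _ := h2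

variable {π : Measure ℝ} [IsProbabilityMeasure π]

lemma aux_ae (l : ℝ) (hsupp : π (Set.Icc l 1)ᶜ = 0) :
    ∀ᵐ t ∂π, t ∈ Set.Icc l 1 := by
  rw [MeasureTheory.ae_iff]
  convert hsupp using 2
  rfl

-- integrability of the complex integrand
lemma aux_int_f (l : ℝ) (hl : 0 < l) (hsupp : π (Set.Icc l 1)ᶜ = 0)
    (m : ℂ) (hm : 0 < m.im) :
    Integrable (fun t : ℝ => (t : ℂ) / (1 + m * (t : ℂ))) π := by
  have hcont : Continuous fun t : ℝ => (t : ℂ) / (1 + m * (t : ℂ)) := by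
    apply Continuous.div (by fun_prop) (by fun_prop)
    exact fun t => aux_ne m hm t
  refine Integrable.mono' (integrable_const (1 / (l * m.im)))
    hcont.aestronglyMeasurable ?_
  filter_upwards [aux_ae l hsupp] with t ht
  have hb := aux_lb m hm ht.1 hl
  have hpos : 0 < l * m.im := by positivity
  rw [norm_div]
  have ht1 : ‖(t : ℂ)‖ ≤ 1 := by
    rw [Complex.norm_real, Real.norm_eq_abs, abs_le]; constructor <;> nlinarith [ht.1, ht.2]
  exact div_le_div₀ (by norm_num) ht1 hpos hb

lemma aux_int_g (l : ℝ) (hl : 0 < l) (hsupp : π (Set.Icc l 1)ᶜ = 0)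
    (m : ℂ) (hm : 0 < m.im) :
    Integrable (fun t : ℝ => t ^ 2 / Complex.normSq (1 + m * (t : ℂ))) π := by
  have hcont : Continuous fun t : ℝ => t ^ 2 / Complex.normSq (1 + m * (t : ℂ)) := by
    apply Continuous.div (by fun_prop)
      (Complex.continuous_normSq.comp (by fun_prop))
    intro t
    exact (Complex.normSq_pos.2 (aux_ne m hm t)).ne'
  refine Integrable.mono' (integrable_const (1 / (l * m.im) ^ 2))
    hcont.aestronglyMeasurable ?_
  filter_upwards [aux_ae l hsupp] with t ht
  have hb := aux_lb m hm ht.1 hl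
  have hpos : 0 < l * m.im := by positivity
  have hns : (l * m.im) ^ 2 ≤ Complex.normSq (1 + m * (t : ℂ)) := by
    rw [Complex.normSq_eq_norm_sq]
    exact pow_le_pow_left₀ hpos.le hb 2
  have ht2 : t ^ 2 ≤ 1 := by nlinarith [ht.1, ht.2]
  have h0 : (0:ℝ) < Complex.normSq (1 + m * (t : ℂ)) := lt_of_lt_of_le (by positivity) hns
  have habs : ‖t ^ 2 / Complex.normSq (1 + m * (t : ℂ))‖
      = t ^ 2 / Complex.normSq (1 + m * (t : ℂ)) := by
    rw [Real.norm_eq_abs]; exact abs_of_nonneg (by positivity)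
  rw [habs]
  exact div_le_div₀ (by norm_num) ht2 (by positivity) hns

lemma aux_im_im (m : ℂ) (t : ℝ) :
    ((t : ℂ) / (1 + m * (t : ℂ))).im
      = -m.im * (t ^ 2 / Complex.normSq (1 + m * (t : ℂ))) := by
  rw [Complex.div_im]
  simp
  ring

/-- key inequality from the imaginary part of the equation -/
lemma aux_key (l : ℝ) (hl : 0 < l) (hsupp : π (Set.Icc l 1)ᶜ = 0)
    (r : ℝ) (hr : 0 < r) (z : ℂ) (hz : 0 < z.im)
    (m : ℂ) (hm : 0 < m.im)
    (he : 1 / m = -z + (r : ℂ) * ∫ t, (t : ℂ) / (1 + m * (t : ℂ)) ∂π) :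
    r * ∫ t, t ^ 2 / Complex.normSq (1 + m * (t : ℂ)) ∂π < 1 / Complex.normSq m := by
  have hint := aux_int_f l hl hsupp m hm
  have him : (∫ t, (t : ℂ) / (1 + m * (t : ℂ)) ∂π).im
      = -m.im * ∫ t, t ^ 2 / Complex.normSq (1 + m * (t : ℂ)) ∂π := by
    have hi := integral_im (𝕜 := ℂ) hint
    calc (∫ t, (t : ℂ) / (1 + m * (t : ℂ)) ∂π).im
        = RCLike.im (∫ t, (t : ℂ) / (1 + m * (t : ℂ)) ∂π) := rfl
      _ = ∫ t, RCLike.im ((t : ℂ) / (1 + m * (t : ℂ))) ∂π := hi.symm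
      _ = ∫ t, -m.im * (t ^ 2 / Complex.normSq (1 + m * (t : ℂ))) ∂π := by
          apply integral_congr_ae
          filter_upwards with t
          rw [show RCLike.im ((t : ℂ) / (1 + m * (t : ℂ)))
              = ((t : ℂ) / (1 + m * (t : ℂ))).im from
            congrFun RCLike.im_eq_complex_im _]
          exact aux_im_im m t
      _ = -m.im * ∫ t, t ^ 2 / Complex.normSq (1 + m * (t : ℂ)) ∂π :=
          integral_const_mul _ _
  have h1 := congrArg Complex.im he
  rw [Complex.add_im, Complex.mul_im] at h1
  simp only [Complex.ofReal_re, Complex.ofReal_im, Complex.neg_im, zero_mul] at h1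
  rw [him] at h1
  have h2 : (1 / m).im = -m.im / Complex.normSq m := by
    rw [one_div, Complex.inv_im]
  rw [h2] at h1
  have hns : 0 < Complex.normSq m := by
    apply Complex.normSq_pos.2
    intro h; rw [h] at hm; simp at hm
  -- h1 : -m.im / normSq m = -z.im + r * (-m.im * J)
  set J := ∫ t, t ^ 2 / Complex.normSq (1 + m * (t : ℂ)) ∂π
  have : r * J * m.im = m.im / Complex.normSq m - z.im := by
    field_simp at h1 ⊢
    nlinarith [h1]
  have h3 : r * J * m.im < m.im / Complex.normSq m := by
    rw [this]; linarith
  have h4 : r * J < (m.im / Complex.normSq m) / m.im := (lt_div_iff₀ hm).2 h3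
  have h5 : (m.im / Complex.normSq m) / m.im = 1 / Complex.normSq m := by
    field_simp
  linarith [h5 ▸ h4]

/-- For a probability measure `π` supported in `[l,1]` (`0 < l < 1`), `r > 0`, and `z`
in the upper half plane, there is at most one `m` in the upper half plane satisfying
the self-consistent equation `1/m = -z + r ∫ t/(1 + m t) dπ(t)`. -/
theorem self_consistent_eq_unique_solution
    (l : ℝ) (hl : 0 < l) (hl1 : l < 1)
    (π : Measure ℝ) [IsProbabilityMeasure π] (hsupp : π (Set.Icc l 1)ᶜ = 0)
    (r : ℝ) (hr : 0 < r) (z : ℂ) (hz : 0 < z.im)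
    (m₁ m₂ : ℂ) (hm₁ : 0 < m₁.im) (hm₂ : 0 < m₂.im)
    (he₁ : 1 / m₁ = -z + (r : ℂ) * ∫ t, (t : ℂ) / (1 + m₁ * (t : ℂ)) ∂π)
    (he₂ : 1 / m₂ = -z + (r : ℂ) * ∫ t, (t : ℂ) / (1 + m₂ * (t : ℂ)) ∂π) :
    m₁ = m₂ := by
  by_contra hne
  have hd : m₂ - m₁ ≠ 0 := sub_ne_zero.2 (Ne.symm hne)
  have hm₁0 : m₁ ≠ 0 := fun h => by rw [h] at hm₁; simp at hm₁
  have hm₂0 : m₂ ≠ 0 := fun h => by rw [h] at hm₂; simp at hm₂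
  have hint₁ := aux_int_f (π := π) l hl hsupp m₁ hm₁
  have hint₂ := aux_int_f (π := π) l hl hsupp m₂ hm₂
  have hintg₁ := aux_int_g (π := π) l hl hsupp m₁ hm₁
  have hintg₂ := aux_int_g (π := π) l hl hsupp m₂ hm₂
  set J₁ := ∫ t, t ^ 2 / Complex.normSq (1 + m₁ * (t : ℂ)) ∂π with hJ₁
  set J₂ := ∫ t, t ^ 2 / Complex.normSq (1 + m₂ * (t : ℂ)) ∂π with hJ₂
  have hkey₁ := aux_key l hl hsupp r hr z hz m₁ hm₁ he₁
  have hkey₂ := aux_key l hl hsupp r hr z hz m₂ hm₂ he₂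
  -- the complex function h
  set h : ℝ → ℂ := fun t => (t : ℂ) ^ 2 / ((1 + m₁ * (t : ℂ)) * (1 + m₂ * (t : ℂ))) with hh
  have hinth : Integrable h π := by
    have : h = fun t : ℝ => (m₂ - m₁)⁻¹ *
        ((t : ℂ) / (1 + m₁ * (t : ℂ)) - (t : ℂ) / (1 + m₂ * (t : ℂ))) := by
      funext t
      have ha := aux_ne m₁ hm₁ t
      have hb := aux_ne m₂ hm₂ t
      rw [hh]
      rw [div_sub_div _ _ ha hb, inv_mul_eq_div, div_div,
        div_eq_div_iff (mul_ne_zero ha hb) (mul_ne_zero (mul_ne_zero ha hb) hd)]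
      ring
    rw [this]
    exact (hint₁.sub hint₂).const_mul _
  -- the difference identity
  have hdiff : 1 / m₁ - 1 / m₂ = (r : ℂ) * ((m₂ - m₁) * ∫ t, h t ∂π) := by
    rw [he₁, he₂]
    have : (∫ t, (t : ℂ) / (1 + m₁ * (t : ℂ)) ∂π) - (∫ t, (t : ℂ) / (1 + m₂ * (t : ℂ)) ∂π)
        = (m₂ - m₁) * ∫ t, h t ∂π := by
      rw [← integral_sub hint₁ hint₂, ← integral_const_mul]
      apply integral_congr_ae
      filter_upwards with t
      have ha := aux_ne m₁ hm₁ t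
      have hb := aux_ne m₂ hm₂ t
      rw [hh]
      simp only [div_sub_div _ _ ha hb, mul_div_assoc']
      rw [div_eq_div_iff (mul_ne_zero ha hb) (mul_ne_zero ha hb)]
      ring
    rw [← this]
    ring
  have hlhs : 1 / m₁ - 1 / m₂ = (m₂ - m₁) * (1 / (m₁ * m₂)) := by
    field_simp
  have heq : 1 / (m₁ * m₂) = (r : ℂ) * ∫ t, h t ∂π := by
    apply mul_left_cancel₀ hd
    rw [← hlhs, hdiff]; ring
  -- norms
  have hnorm : ‖(1 : ℂ) / (m₁ * m₂)‖ = 1 / (‖m₁‖ * ‖m₂‖) := by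
    rw [norm_div, norm_mul, norm_one]
  set lam : ℝ := ‖m₁‖ / ‖m₂‖ with hlam
  have hn₁ : 0 < ‖m₁‖ := norm_pos_iff.2 hm₁0
  have hn₂ : 0 < ‖m₂‖ := norm_pos_iff.2 hm₂0
  have hlam0 : 0 < lam := div_pos hn₁ hn₂
  -- pointwise bound on ‖h t‖
  have hpt : ∀ t : ℝ, ‖h t‖ ≤ lam / 2 * (t ^ 2 / Complex.normSq (1 + m₁ * (t : ℂ)))
      + lam⁻¹ / 2 * (t ^ 2 / Complex.normSq (1 + m₂ * (t : ℂ))) := by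
    intro t
    have ha := aux_ne m₁ hm₁ t
    have hb := aux_ne m₂ hm₂ t
    have hA : 0 < ‖1 + m₁ * (t : ℂ)‖ := norm_pos_iff.2 ha
    have hB : 0 < ‖1 + m₂ * (t : ℂ)‖ := norm_pos_iff.2 hb
    have hha : ‖h t‖ = t ^ 2 / (‖1 + m₁ * (t : ℂ)‖ * ‖1 + m₂ * (t : ℂ)‖) := by
      rw [hh]
      simp only [norm_div, norm_mul, norm_pow, Complex.norm_real, Real.norm_eq_abs]
      rw [_root_.sq_abs]
    rw [hha, Complex.normSq_eq_norm_sq, Complex.normSq_eq_norm_sq]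
    set A := ‖1 + m₁ * (t : ℂ)‖
    set B := ‖1 + m₂ * (t : ℂ)‖
    have ht2 : (0:ℝ) ≤ t ^ 2 := sq_nonneg t
    have base : 1/(A*B) ≤ lam/2 * (1/A^2) + lam⁻¹/2 * (1/B^2) := by
      have hdiffid : lam/2 * (1/A^2) + lam⁻¹/2 * (1/B^2) - 1/(A*B)
          = (lam^2*B^2 + A^2 - 2*lam*A*B)/(2*lam*A^2*B^2) := by
        field_simp
      have hnum : (0:ℝ) ≤ (lam^2*B^2 + A^2 - 2*lam*A*B)/(2*lam*A^2*B^2) :=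
        div_nonneg (by nlinarith [sq_nonneg (lam*B - A)]) (by positivity)
      linarith [hdiffid ▸ hnum]
    calc t ^ 2 / (A*B) = t ^ 2 * (1/(A*B)) := by ring
      _ ≤ t ^ 2 * (lam/2 * (1/A^2) + lam⁻¹/2 * (1/B^2)) :=
          mul_le_mul_of_nonneg_left base ht2
      _ = lam / 2 * (t ^ 2 / A ^ 2) + lam⁻¹ / 2 * (t ^ 2 / B ^ 2) := by ring
  -- integrate the pointwise bound
  have hIle : ‖∫ t, h t ∂π‖ ≤ ∫ t, ‖h t‖ ∂π := norm_integral_le_integral_norm _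
  have hmono : ∫ t, ‖h t‖ ∂π ≤ lam / 2 * J₁ + lam⁻¹ / 2 * J₂ := by
    calc ∫ t, ‖h t‖ ∂π
        ≤ ∫ t, (lam / 2 * (t ^ 2 / Complex.normSq (1 + m₁ * (t : ℂ)))
            + lam⁻¹ / 2 * (t ^ 2 / Complex.normSq (1 + m₂ * (t : ℂ)))) ∂π :=
          integral_mono hinth.norm
            ((hintg₁.const_mul _).add (hintg₂.const_mul _)) hpt
      _ = lam / 2 * J₁ + lam⁻¹ / 2 * J₂ := by
          rw [integral_add (hintg₁.const_mul _) (hintg₂.const_mul _),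
            integral_const_mul, integral_const_mul]
  -- final strict inequality
  have hend : lam / 2 * (1 / Complex.normSq m₁) + lam⁻¹ / 2 * (1 / Complex.normSq m₂)
      = 1 / (‖m₁‖ * ‖m₂‖) := by
    have e1 : Complex.normSq m₁ = ‖m₁‖ ^ 2 := by
      rw [Complex.normSq_eq_norm_sq]
    have e2 : Complex.normSq m₂ = ‖m₂‖ ^ 2 := by
      rw [Complex.normSq_eq_norm_sq]
    have gen : ∀ a b : ℝ, 0 < a → 0 < b →
        (a / b) / 2 * (1 / a ^ 2) + (a / b)⁻¹ / 2 * (1 / b ^ 2) = 1 / (a * b) := by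
      intro a b ha hb
      rw [inv_div]
      field_simp
      ring
    rw [e1, e2, hlam]
    exact gen _ _ hn₁ hn₂
  have hfin : r * ∫ t, ‖h t‖ ∂π < 1 / (‖m₁‖ * ‖m₂‖) := by
    have h1 : r * ∫ t, ‖h t‖ ∂π ≤ lam / 2 * (r * J₁) + lam⁻¹ / 2 * (r * J₂) := by
      calc r * ∫ t, ‖h t‖ ∂π ≤ r * (lam / 2 * J₁ + lam⁻¹ / 2 * J₂) :=
            mul_le_mul_of_nonneg_left hmono hr.le
        _ = lam / 2 * (r * J₁) + lam⁻¹ / 2 * (r * J₂) := by ring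
    have h2 : lam / 2 * (r * J₁) + lam⁻¹ / 2 * (r * J₂)
        < lam / 2 * (1 / Complex.normSq m₁) + lam⁻¹ / 2 * (1 / Complex.normSq m₂) := by
      have hi : 0 < lam⁻¹ := inv_pos.2 hlam0
      apply add_lt_add
      · exact mul_lt_mul_of_pos_left hkey₁ (by positivity)
      · exact mul_lt_mul_of_pos_left hkey₂ (by positivity)
    calc r * ∫ t, ‖h t‖ ∂π ≤ _ := h1
      _ < _ := h2
      _ = 1 / (‖m₁‖ * ‖m₂‖) := hend
  have hcontra : ‖(1:ℂ) / (m₁ * m₂)‖ < 1 / (‖m₁‖ * ‖m₂‖) := by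
    rw [heq, norm_mul, Complex.norm_real, Real.norm_eq_abs, abs_of_pos hr]
    calc r * ‖∫ t, h t ∂π‖ ≤ r * ∫ t, ‖h t‖ ∂π :=
          mul_le_mul_of_nonneg_left hIle hr.le
      _ < _ := hfin
  rw [hnorm] at hcontra
  exact lt_irrefl _ hcontra
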